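/- Let G ∈ ℝ^{P × P} be a nonzero symmetric positive semidefinite matrix with smallest nonzero eigenvalue τ > 0 and rank k, let 𝒫(G) be the orthogonal projection onto the image of G, and let α > 0. Set A = (α I_P + G)⁻¹ and B = α⁻¹ (I_P − 𝒫(G)). Then A and B are commuting symmetric positive semidefinite matrices and the squared Frobenius distance between their positive semidefinite square roots satisfies ‖A^{1/2} − B^{1/2}‖_F² ≤ k/(τ + α). Since A and B commute, this quantity equals the squared 2-Wasserstein distance between the Gaussians N(θ₀, A) and N(θ₀, B) with common mean θ₀, i.e. d²(q_LLA, q_proj) ≤ k/(τ + α). -/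

import Mathlib

open Matrix

set_option linter.unusedSectionVars false

section PosSemidefSqrt

open scoped ComplexOrder

/-- The positive semidefinite square root of a positive semidefinite matrix
(the Mathlib definition of December 2024, since removed from Mathlib). -/
noncomputable def Matrix.PosSemidef.sqrt {n : Type*} {𝕜 : Type*} [Fintype n] [DecidableEq n]
    [RCLike 𝕜] {A : Matrix n n 𝕜} (hA : A.PosSemidef) : Matrix n n 𝕜 :=
  hA.1.eigenvectorUnitary.1 * diagonal ((↑) ∘ (√·) ∘ hA.1.eigenvalues) *
  (star hA.1.eigenvectorUnitary : Matrix n n 𝕜)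

end PosSemidefSqrt

section PosSemidefSqrtAux
open scoped MatrixOrder ComplexOrder
variable {n : Type*} [Fintype n] [DecidableEq n]

lemma Matrix.PosSemidef.sqrt_eq_cfc {A : Matrix n n ℝ} (hA : A.PosSemidef) :
    hA.sqrt = CFC.sqrt A := by
  rw [CFC.sqrt_eq_real_sqrt A (Matrix.nonneg_iff_posSemidef.mpr hA), cfcₙ_eq_cfc, hA.1.cfc_eq]
  simp [Matrix.IsHermitian.cfc, Matrix.PosSemidef.sqrt, Unitary.conjStarAlgAut_apply]

lemma Matrix.PosSemidef.posSemidef_sqrt {A : Matrix n n ℝ} (hA : A.PosSemidef) :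
    hA.sqrt.PosSemidef := by
  rw [hA.sqrt_eq_cfc]; exact Matrix.nonneg_iff_posSemidef.mp (CFC.sqrt_nonneg A)

lemma Matrix.PosSemidef.sqrt_mul_self {A : Matrix n n ℝ} (hA : A.PosSemidef) :
    hA.sqrt * hA.sqrt = A := by
  rw [hA.sqrt_eq_cfc]; exact CFC.sqrt_mul_sqrt_self A (Matrix.nonneg_iff_posSemidef.mpr hA)

lemma Matrix.PosSemidef.eq_sqrt_of_sq_eq {A : Matrix n n ℝ} (hA : A.PosSemidef)
    {B : Matrix n n ℝ} (hB : B.PosSemidef) (h : A ^ 2 = B) : A = hB.sqrt := by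
  rw [hB.sqrt_eq_cfc]
  exact ((CFC.sqrt_eq_iff B A (Matrix.nonneg_iff_posSemidef.mpr hB)
    (Matrix.nonneg_iff_posSemidef.mpr hA)).mpr (by rw [← h, sq])).symm

end PosSemidefSqrtAux

section Aux
variable {n : Type*} [Fintype n] [DecidableEq n]

lemma psd_trace_nonneg {M : Matrix n n ℝ} (h : M.PosSemidef) : 0 ≤ M.trace := by
  exact h.trace_nonneg

lemma psd_smul {M : Matrix n n ℝ} (h : M.PosSemidef) {c : ℝ} (hc : 0 ≤ c) :
    (c • M).PosSemidef := by
  refine Matrix.PosSemidef.of_dotProduct_mulVec_nonneg ?_ (fun x => ?_)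
  · unfold Matrix.IsHermitian
    rw [conjTranspose_smul, h.1]
    simp
  · rw [smul_mulVec, dotProduct_smul, smul_eq_mul]
    exact mul_nonneg hc (h.dotProduct_mulVec_nonneg x)

lemma symm_mulVec_dot {n : Type*} [Fintype n] (S : Matrix n n ℝ) (hS : Sᵀ = S)
    (a b : n → ℝ) : S *ᵥ a ⬝ᵥ b = a ⬝ᵥ S *ᵥ b := by
  conv_rhs => rw [Matrix.dotProduct_mulVec, ← hS, Matrix.vecMul_transpose]

lemma trace_eq_rank_of_idem {Q : Matrix n n ℝ} (h : Q * Q = Q) :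
    Q.trace = (Q.rank : ℝ) := by
  have hproj : LinearMap.IsProj (LinearMap.range Q.mulVecLin) Q.mulVecLin := by
    constructor
    · intro x; exact LinearMap.mem_range_self _ x
    · rintro _ ⟨y, rfl⟩
      simp [Matrix.mulVecLin_apply, Matrix.mulVec_mulVec, h]
  have ht := hproj.trace
  rw [LinearMap.trace_eq_matrix_trace ℝ (Pi.basisFun ℝ n), LinearMap.toMatrix_eq_toMatrix',
    ← Matrix.toLin'_apply', LinearMap.toMatrix'_toLin'] at ht
  rw [ht, Matrix.rank, Matrix.toLin'_apply']

end Aux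

/-- With `A = (α I + G)⁻¹` the LLA covariance and `B = α⁻¹ (I - 𝒫(G))` the
scaled projected covariance, `A` and `B` commute and the squared Frobenius distance between
their psd square roots — i.e. the squared 2-Wasserstein distance between the two Gaussians
`N(θ₀, A)` and `N(θ₀, B)` — is at most `k/(τ + α)`, where `k = rank(G)` and `τ` is the
smallest nonzero eigenvalue of `G`.  (For real matrices, `‖X‖_F² = tr(Xᵀ X)`.) -/
theorem wasserstein_bound_lla_vs_projected
    (P : ℕ)
    (G : Matrix (Fin P) (Fin P) ℝ) (hG : G.PosSemidef) (hG0 : G ≠ 0)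
    (α : ℝ) (hα : 0 < α)
    (τ : ℝ) (hτ : 0 < τ)
    -- `τ` is the smallest nonzero eigenvalue of `G`:
    (hτ_le : ∀ v : Fin P → ℝ, (∃ w, v = G.mulVec w) → τ * (v ⬝ᵥ v) ≤ G.mulVec v ⬝ᵥ v)
    (hτ_ex : ∃ v : Fin P → ℝ, v ≠ 0 ∧ G.mulVec v = τ • v)
    -- `Q` is the orthogonal projection onto the image of `G`:
    (Q : Matrix (Fin P) (Fin P) ℝ)
    (hQsym : Qᵀ = Q) (hQidem : Q * Q = Q)
    (hQfix : Q * G = G)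
    (hQrange : ∀ v : Fin P → ℝ, ∃ w, Q.mulVec v = G.mulVec w)
    -- the two covariances and their positive semidefiniteness:
    (A B : Matrix (Fin P) (Fin P) ℝ)
    (hAdef : A = (α • (1 : Matrix (Fin P) (Fin P) ℝ) + G)⁻¹)
    (hBdef : B = α⁻¹ • ((1 : Matrix (Fin P) (Fin P) ℝ) - Q))
    (hA : A.PosSemidef) (hB : B.PosSemidef) :
    Aᵀ = A ∧ Bᵀ = B ∧ A * B = B * A ∧
    Matrix.trace ((hA.sqrt - hB.sqrt)ᵀ * (hA.sqrt - hB.sqrt)) ≤ (G.rank : ℝ) / (τ + α) := by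
  have hGsym : Gᵀ = G := by
    rw [← Matrix.conjTranspose_eq_transpose_of_trivial]; exact hG.1
  set M : Matrix (Fin P) (Fin P) ℝ := α • 1 + G with hMdef
  -- M is positive definite, hence invertible
  have hMpd : M.PosDef := by
    have h1 : (α • (1 : Matrix (Fin P) (Fin P) ℝ)).PosDef := by
      rw [Matrix.smul_one_eq_diagonal]
      exact Matrix.PosDef.diagonal (fun _ => hα)
    exact h1.add_posSemidef hG
  have hMdet : IsUnit M.det := (Matrix.isUnit_iff_isUnit_det M).mp hMpd.isUnit
  have hAM : A * M = 1 := by rw [hAdef]; exact Matrix.nonsing_inv_mul M hMdet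
  have hMA : M * A = 1 := by rw [hAdef]; exact Matrix.mul_nonsing_inv M hMdet
  -- basic commutation facts
  have hGQ : G * Q = G := by
    have := congrArg Matrix.transpose hQfix
    rwa [Matrix.transpose_mul, hGsym, hQsym] at this
  have hMQ : M * Q = Q * M := by
    rw [hMdef, add_mul, mul_add, smul_mul_assoc, mul_smul_comm, one_mul, mul_one, hGQ, hQfix]
  have hAQ : Q * A = A * Q := by
    calc Q * A = (A * M) * Q * A := by rw [hAM, one_mul]
    _ = A * (M * Q) * A := by rw [Matrix.mul_assoc A M Q]
    _ = A * Q * (M * A) := by rw [hMQ]; rw [Matrix.mul_assoc, Matrix.mul_assoc, Matrix.mul_assoc]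
    _ = A * Q := by rw [hMA, Matrix.mul_assoc, mul_one]
  set R : Matrix (Fin P) (Fin P) ℝ := 1 - Q with hRdef
  have hRsym : Rᵀ = R := by rw [hRdef, Matrix.transpose_sub, Matrix.transpose_one, hQsym]
  have hRidem : R * R = R := by
    rw [hRdef, sub_mul, mul_sub, mul_sub, one_mul, mul_one, one_mul, hQidem]
    abel
  have hRpsd : R.PosSemidef := by
    have := Matrix.posSemidef_conjTranspose_mul_self R
    rwa [Matrix.conjTranspose_eq_transpose_of_trivial, hRsym, hRidem] at this
  have hQpsd : Q.PosSemidef := by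
    have := Matrix.posSemidef_conjTranspose_mul_self Q
    rwa [Matrix.conjTranspose_eq_transpose_of_trivial, hQsym, hQidem] at this
  have hQR : Q * R = 0 := by rw [hRdef, mul_sub, mul_one, hQidem, sub_self]
  have hRQ : R * Q = 0 := by rw [hRdef, sub_mul, one_mul, hQidem, sub_self]
  -- A * R = α⁻¹ • R
  have hRM : R * M = α • R := by
    rw [hRdef, hMdef]
    simp only [sub_mul, mul_add, one_mul, mul_smul_comm, mul_one, hQfix, smul_sub]
    abel
  have hRA : R * A = α⁻¹ • R := by
    have h1 : (R * M) * A = R := by rw [Matrix.mul_assoc, hMA, mul_one]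
    rw [hRM, smul_mul_assoc] at h1
    have h2 := congrArg (fun X => α⁻¹ • X) h1
    simpa only [smul_smul, inv_mul_cancel₀ (ne_of_gt hα), one_smul] using h2
  have hAR : A * R = α⁻¹ • R := by
    have : A * R = R * A := by
      rw [hRdef, mul_sub, sub_mul, mul_one, one_mul, hAQ]
    rw [this, hRA]
  -- the square root of B
  set s : ℝ := Real.sqrt α⁻¹ with hsdef
  have hs : s * s = α⁻¹ := Real.mul_self_sqrt (inv_nonneg.mpr hα.le)
  have hsnn : 0 ≤ s := Real.sqrt_nonneg _
  have hsRpsd : (s • R).PosSemidef := psd_smul hRpsd hsnn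
  have hBsqrt : hB.sqrt = s • R := by
    refine (hsRpsd.eq_sqrt_of_sq_eq hB ?_).symm
    rw [pow_two, smul_mul_assoc, mul_smul_comm, smul_smul, hs, hRidem, hBdef]
  -- the square root of A
  have hQAQpsd : (Q * A * Q).PosSemidef := by
    have := hA.mul_mul_conjTranspose_same Q
    rwa [Matrix.conjTranspose_eq_transpose_of_trivial, hQsym] at this
  set W : Matrix (Fin P) (Fin P) ℝ := hQAQpsd.sqrt with hWdef
  have hWpsd : W.PosSemidef := hQAQpsd.posSemidef_sqrt
  have hWsym : Wᵀ = W := by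
    rw [← Matrix.conjTranspose_eq_transpose_of_trivial]; exact hWpsd.1
  have hWW : W * W = Q * A * Q := hQAQpsd.sqrt_mul_self
  have hWR : W * R = 0 := by
    have h0 : (W * R)ᴴ * (W * R) = 0 := by
      rw [Matrix.conjTranspose_mul, Matrix.conjTranspose_eq_transpose_of_trivial,
        Matrix.conjTranspose_eq_transpose_of_trivial, hRsym, hWsym]
      calc R * W * (W * R) = R * (W * W) * R := by
            rw [Matrix.mul_assoc, Matrix.mul_assoc, Matrix.mul_assoc]
      _ = R * (Q * A * Q * R) := by rw [hWW, Matrix.mul_assoc]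
      _ = 0 := by rw [Matrix.mul_assoc (Q * A) Q R, hQR, Matrix.mul_zero, Matrix.mul_zero]
    exact Matrix.conjTranspose_mul_self_eq_zero.mp h0
  have hRW : R * W = 0 := by
    have := congrArg Matrix.transpose hWR
    rwa [Matrix.transpose_mul, hRsym, hWsym, Matrix.transpose_zero] at this
  have hQAQ : Q * A * Q = A * Q := by
    rw [← hAQ, Matrix.mul_assoc, hAQ, ← Matrix.mul_assoc, hAQ, Matrix.mul_assoc, hQidem]
  have hNpsd : (s • R + W).PosSemidef := hsRpsd.add hWpsd
  have hAsqrt : hA.sqrt = s • R + W := by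
    refine (hNpsd.eq_sqrt_of_sq_eq hA ?_).symm
    have hsq : (s • R + W) ^ 2 = α⁻¹ • R + Q * A * Q := by
      have t1 : (s • R) * (s • R) = α⁻¹ • R := by
        rw [smul_mul_assoc, mul_smul_comm, smul_smul, hs, hRidem]
      have t2 : (s • R) * W = 0 := by rw [smul_mul_assoc, hRW, smul_zero]
      have t3 : W * (s • R) = 0 := by rw [mul_smul_comm, hWR, smul_zero]
      rw [pow_two, add_mul, mul_add, mul_add, t1, t2, t3, hWW, add_zero, zero_add]
    rw [hsq, hQAQ]
    calc α⁻¹ • R + A * Q = A * R + A * Q := by rw [hAR]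
    _ = A * (R + Q) := by rw [mul_add]
    _ = A := by rw [hRdef, sub_add_cancel, mul_one]
  -- assemble
  refine ⟨?_, ?_, ?_, ?_⟩
  · rw [← Matrix.conjTranspose_eq_transpose_of_trivial]; exact hA.1
  · rw [← Matrix.conjTranspose_eq_transpose_of_trivial]; exact hB.1
  · rw [hBdef, mul_smul_comm, smul_mul_assoc]
    congr 1
    rw [mul_sub, sub_mul, mul_one, one_mul, hAQ]
  · have hdiff : hA.sqrt - hB.sqrt = W := by rw [hAsqrt, hBsqrt, add_sub_cancel_left]
    rw [hdiff, hWsym, hWW, hQAQ]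
    -- now bound trace (A * Q)
    have hGτQpsd : (G - τ • Q).PosSemidef := by
      refine Matrix.PosSemidef.of_dotProduct_mulVec_nonneg ?_ (fun x => ?_)
      · unfold Matrix.IsHermitian
        rw [Matrix.conjTranspose_sub, Matrix.conjTranspose_smul,
          Matrix.conjTranspose_eq_transpose_of_trivial,
          Matrix.conjTranspose_eq_transpose_of_trivial, hGsym, hQsym]
        norm_num
      · have hxq : Q *ᵥ x ⬝ᵥ Q *ᵥ x = x ⬝ᵥ Q *ᵥ x := by
          rw [symm_mulVec_dot Q hQsym x (Q *ᵥ x), Matrix.mulVec_mulVec, hQidem]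
        have hmem : ∃ w, Q *ᵥ x = G.mulVec w := hQrange x
        have hle := hτ_le (Q *ᵥ x) ⟨_, (hmem.choose_spec)⟩
        have hGQx : G *ᵥ (Q *ᵥ x) = G *ᵥ x := by rw [Matrix.mulVec_mulVec, hGQ]
        have hGxQx : G *ᵥ x ⬝ᵥ Q *ᵥ x = x ⬝ᵥ G *ᵥ x := by
          rw [symm_mulVec_dot G hGsym x (Q *ᵥ x), hGQx]
        rw [hGQx, hxq] at hle
        rw [hGxQx] at hle
        have hstar : star x = x := by simp
        rw [Matrix.sub_mulVec, dotProduct_sub, Matrix.smul_mulVec,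
          dotProduct_smul, smul_eq_mul, hstar]
        linarith
    -- key identity
    have hAGdecomp : A * G = Q - α • (A * Q) := by
      have h1 : M * Q = α • Q + G := by
        rw [hMdef, add_mul, smul_mul_assoc, one_mul, hGQ]
      have h2 : Q = α • (A * Q) + A * G := by
        calc Q = (A * M) * Q := by rw [hAM, one_mul]
        _ = A * (α • Q + G) := by rw [Matrix.mul_assoc, h1]
        _ = α • (A * Q) + A * G := by rw [mul_add, mul_smul_comm]
      exact eq_sub_of_add_eq (by rw [add_comm]; exact h2.symm)
    have hkey : A * (G - τ • Q) = Q - (τ + α) • (A * Q) := by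
      rw [mul_sub, mul_smul_comm, hAGdecomp, add_smul]
      abel
    have htrpos : 0 ≤ (A * (G - τ • Q)).trace := by
      set N := hA.sqrt with hNdef
      have hNsym : Nᵀ = N := by
        rw [← Matrix.conjTranspose_eq_transpose_of_trivial]; exact hA.posSemidef_sqrt.1
      have hNN : N * N = A := hA.sqrt_mul_self
      have heq : (A * (G - τ • Q)).trace = (N * (G - τ • Q) * N).trace := by
        rw [← hNN, Matrix.mul_assoc, Matrix.trace_mul_comm]
      rw [heq]
      have := hGτQpsd.mul_mul_conjTranspose_same N
      rw [Matrix.conjTranspose_eq_transpose_of_trivial, hNsym] at this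
      exact psd_trace_nonneg this
    rw [hkey, Matrix.trace_sub, Matrix.trace_smul, smul_eq_mul] at htrpos
    -- trace Q = rank G
    have hrange : LinearMap.range Q.mulVecLin = LinearMap.range G.mulVecLin := by
      apply le_antisymm
      · rintro _ ⟨v, rfl⟩
        obtain ⟨w, hw⟩ := hQrange v
        exact ⟨w, by rw [Matrix.mulVecLin_apply, Matrix.mulVecLin_apply, ← hw]⟩
      · rintro _ ⟨v, rfl⟩
        exact ⟨G *ᵥ v, by
          rw [Matrix.mulVecLin_apply, Matrix.mulVecLin_apply, Matrix.mulVec_mulVec, hQfix]⟩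
    have hrank : Q.rank = G.rank := by rw [Matrix.rank, Matrix.rank, hrange]
    have htrQ : Q.trace = (G.rank : ℝ) := by rw [trace_eq_rank_of_idem hQidem, hrank]
    have hταpos : 0 < τ + α := by linarith
    rw [le_div_iff₀ hταpos]
    rw [htrQ] at htrpos
    linarith
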